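/- The alternating coloring Z_∞^t = (0^t 1^t)^{n/(2t)} of {1,...,n} (blocks of t zeros alternating with t ones), for any fixed t ≥ 1, has n²/16 + O(n) monochromatic Schur triples. -/

import Mathlib

open Finset

/-- Number of monochromatic Schur triples (i, j, i+j), i < j, i+j ≤ n, of a coloring c. -/
def schurCount (n : ℕ) (c : ℕ → ℕ) : ℕ :=
  ((Finset.Icc 1 n ×ˢ Finset.Icc 1 n).filter
    (fun p => p.1 < p.2 ∧ p.1 + p.2 ≤ n ∧ c p.1 = c p.2 ∧ c p.2 = c (p.1 + p.2))).card

/-- The alternating coloring (0^t 1^t)^∞ : i gets 0 if ⌈i/t⌉ is odd and 1 if it is even. -/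
def altColoring (t : ℕ) (i : ℕ) : ℕ :=
  if ((i + t - 1) / t) % 2 = 1 then 0 else 1

lemma alt_period (t : ℕ) (ht : 1 ≤ t) (x : ℕ) :
    altColoring t (x + 2*t) = altColoring t x := by
  unfold altColoring
  have h1 : x + 2*t + t - 1 = (x + t - 1) + t*2 := by omega
  rw [h1, Nat.add_mul_div_left _ _ ht]
  simp [Nat.add_mod]

lemma alt_zero (t : ℕ) (ht : 1 ≤ t) : altColoring t 0 = 1 := by
  unfold altColoring
  rw [show 0 + t - 1 = t - 1 by omega, Nat.div_eq_of_lt (by omega)]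
  simp

lemma alt_low (t : ℕ) (ht : 1 ≤ t) (x : ℕ) (h1 : 1 ≤ x) (h2 : x ≤ t) :
    altColoring t x = 0 := by
  unfold altColoring
  have : (x + t - 1) / t = 1 := Nat.div_eq_of_lt_le (by omega) (by omega)
  simp [this]

lemma alt_high (t : ℕ) (ht : 1 ≤ t) (x : ℕ) (h1 : t + 1 ≤ x) (h2 : x < 2*t) :
    altColoring t x = 1 := by
  unfold altColoring
  have : (x + t - 1) / t = 2 := Nat.div_eq_of_lt_le (by omega) (by omega)
  simp [this]

lemma alt_cases (t : ℕ) (x : ℕ) : altColoring t x = 0 ∨ altColoring t x = 1 := by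
  unfold altColoring; split <;> simp

/-- Sum of a periodic function over any full period window. -/
lemma sum_window {M : Type*} [AddCommGroup M] (g : ℕ → M) (p : ℕ)
    (hg : ∀ x, g (x + p) = g x) (a : ℕ) :
    ∑ x ∈ Ico a (a + p), g x = ∑ x ∈ Ico 0 p, g x := by
  induction a with
  | zero => simp
  | succ a ih =>
    have h1 : ∑ x ∈ Ico a (a + p + 1), g x = ∑ x ∈ Ico a (a + p), g x + g (a + p) :=
      Finset.sum_Ico_succ_top (Nat.le_add_right _ _) g
    have h2 : ∑ x ∈ Ico a (a + p + 1), g x = g a + ∑ x ∈ Ico (a+1) (a + p + 1), g x :=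
      Finset.sum_eq_sum_Ico_succ_bot (by omega) g
    have h3 : a + 1 + p = a + p + 1 := by omega
    rw [h3]
    rw [← ih]
    rw [h1, hg a] at h2
    have h4 : g a + ∑ x ∈ Ico a (a + p), g x = g a + ∑ x ∈ Ico (a+1) (a+p+1), g x := by
      rw [← h2]; abel
    exact (add_left_cancel h4).symm


/-- Sum of a periodic function over q consecutive full periods. -/
lemma sum_blocks {M : Type*} [AddCommGroup M] (g : ℕ → M) (p : ℕ)
    (hg : ∀ x, g (x + p) = g x) (a q : ℕ) :
    ∑ x ∈ Ico a (a + q * p), g x = q • (∑ x ∈ Ico 0 p, g x) := by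
  induction q with
  | zero => simp
  | succ q ih =>
    have h1 : a ≤ a + q * p := by omega
    have h2 : a + q * p ≤ a + (q+1) * p := by nlinarith [Nat.le_refl 0]
    rw [← Finset.sum_Ico_consecutive g h1 h2, ih]
    have h3 : a + (q+1)*p = (a + q*p) + p := by ring
    rw [h3, sum_window g p hg (a + q*p), succ_nsmul]

section Fixed
variable (t : ℕ)

/-- indicator (in ℤ) that j forms a mono triple with i. -/
def indZ (i j : ℕ) : ℤ :=
  if altColoring t j = altColoring t i ∧ altColoring t (i+j) = altColoring t i then 1 else 0

/-- number of good j's in one period. -/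
def WZ (i : ℕ) : ℤ := ∑ j ∈ Ico 0 (2*t), indZ t i j

lemma indZ_nonneg (i j : ℕ) : 0 ≤ indZ t i j := by unfold indZ; split <;> simp

lemma indZ_le_one (i j : ℕ) : indZ t i j ≤ 1 := by unfold indZ; split <;> simp

lemma indZ_period (ht : 1 ≤ t) (i j : ℕ) : indZ t i (j + 2*t) = indZ t i j := by
  unfold indZ
  rw [alt_period t ht j, show i + (j + 2*t) = (i+j) + 2*t by ring, alt_period t ht (i+j)]

lemma indZ_period_left (ht : 1 ≤ t) (i j : ℕ) : indZ t (i + 2*t) j = indZ t i j := by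
  unfold indZ
  rw [alt_period t ht i, show i + 2*t + j = (i+j) + 2*t by ring, alt_period t ht (i+j)]

lemma WZ_nonneg (i : ℕ) : 0 ≤ WZ t i :=
  Finset.sum_nonneg fun j _ => indZ_nonneg t i j

lemma WZ_le (i : ℕ) : WZ t i ≤ 2*t := by
  have h := Finset.sum_le_card_nsmul (Ico 0 (2*t)) (indZ t i) 1 (fun j _ => indZ_le_one t i j)
  rw [Nat.card_Ico] at h
  unfold WZ
  calc ∑ j ∈ Ico 0 (2*t), indZ t i j ≤ (2*t - 0) • (1:ℤ) := h
    _ = 2*t := by simp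

lemma WZ_period (ht : 1 ≤ t) (i : ℕ) : WZ t (i + 2*t) = WZ t i := by
  unfold WZ
  exact Finset.sum_congr rfl fun j _ => indZ_period_left t ht i j

end Fixed

def chiZ (t : ℕ) (x : ℕ) : ℤ := 1 - 2 * (altColoring t x)

lemma chiZ_period (t : ℕ) (ht : 1 ≤ t) (x : ℕ) : chiZ t (x + 2*t) = chiZ t x := by
  unfold chiZ; rw [alt_period t ht x]

lemma chiZ_sum_zero (t : ℕ) (ht : 1 ≤ t) : ∑ x ∈ Ico 0 (2*t), chiZ t x = 0 := by
  have h1 : (1:ℕ) ≤ t + 1 := by omega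
  have h0 : (0:ℕ) ≤ 1 := by omega
  have h2 : t + 1 ≤ 2*t := by omega
  rw [← Finset.sum_Ico_consecutive (chiZ t) (by omega : (0:ℕ) ≤ t+1) h2,
      ← Finset.sum_Ico_consecutive (chiZ t) (by omega : (0:ℕ) ≤ 1) (by omega : (1:ℕ) ≤ t+1)]
  have e1 : ∑ x ∈ Ico 0 1, chiZ t x = -1 := by
    simp [chiZ, alt_zero t ht]
  have e2 : ∑ x ∈ Ico 1 (t+1), chiZ t x = t := by
    have : ∀ x ∈ Ico 1 (t+1), chiZ t x = 1 := by
      intro x hx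
      simp only [Finset.mem_Ico] at hx
      simp [chiZ, alt_low t ht x hx.1 (by omega)]
    rw [Finset.sum_congr rfl this, Finset.sum_const, Nat.card_Ico]
    simp
  have e3 : ∑ x ∈ Ico (t+1) (2*t), chiZ t x = -(t-1 : ℤ) := by
    have : ∀ x ∈ Ico (t+1) (2*t), chiZ t x = -1 := by
      intro x hx
      simp only [Finset.mem_Ico] at hx
      simp [chiZ, alt_high t ht x hx.1 hx.2]
    rw [Finset.sum_congr rfl this, Finset.sum_const, Nat.card_Ico]
    rw [nsmul_eq_mul, mul_neg_one]
    omega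
  rw [e1, e2, e3]
  ring

lemma four_indZ (t : ℕ) (i j : ℕ) :
    4 * indZ t i j = 1 + chiZ t i * chiZ t j + chiZ t j * chiZ t (i+j)
      + chiZ t i * chiZ t (i+j) := by
  unfold indZ chiZ
  rcases alt_cases t i with hi | hi <;> rcases alt_cases t j with hj | hj <;>
    rcases alt_cases t (i+j) with hk | hk <;>
    simp [hi, hj, hk] <;> ring

lemma sum_WZ (t : ℕ) (ht : 1 ≤ t) : ∑ i ∈ Ico 0 (2*t), WZ t i = t^2 := by
  have hcs : ∑ j ∈ Ico 0 (2*t), chiZ t j = 0 := chiZ_sum_zero t ht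
  have hshift : ∀ i : ℕ, ∑ j ∈ Ico 0 (2*t), chiZ t (i+j) = 0 := by
    intro i
    have h : ∑ j ∈ Ico 0 (2*t), chiZ t (i+j) = ∑ x ∈ Ico i (i + 2*t), chiZ t x := by
      rw [Finset.sum_Ico_eq_sum_range (chiZ t) i (i+2*t), show i+2*t-i = 2*t by omega,
          Finset.range_eq_Ico]
    rw [h, sum_window (chiZ t) (2*t) (chiZ_period t ht) i, chiZ_sum_zero t ht]
  have key : 4 * ∑ i ∈ Ico 0 (2*t), WZ t i = 4 * t^2 := by
    unfold WZ
    rw [Finset.mul_sum]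
    have step : ∀ i ∈ Ico 0 (2*t),
        4 * ∑ j ∈ Ico 0 (2*t), indZ t i j
          = 2*t + ∑ j ∈ Ico 0 (2*t), chiZ t j * chiZ t (i+j) := by
      intro i _
      rw [Finset.mul_sum, Finset.sum_congr rfl (fun j _ => four_indZ t i j)]
      rw [Finset.sum_add_distrib, Finset.sum_add_distrib, Finset.sum_add_distrib,
          Finset.sum_const, Nat.card_Ico, ← Finset.mul_sum, ← Finset.mul_sum,
          hcs, hshift i]
      rw [Nat.sub_zero]
      push_cast
      ring
    rw [Finset.sum_congr rfl step, Finset.sum_add_distrib, Finset.sum_const, Nat.card_Ico]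
    have hmix : ∑ i ∈ Ico 0 (2*t), ∑ j ∈ Ico 0 (2*t), chiZ t j * chiZ t (i+j) = 0 := by
      rw [Finset.sum_comm]
      have inner : ∀ j ∈ Ico 0 (2*t), ∑ i ∈ Ico 0 (2*t), chiZ t j * chiZ t (i+j) = 0 := by
        intro j _
        rw [← Finset.mul_sum]
        have h : ∑ i ∈ Ico 0 (2*t), chiZ t (i+j) = 0 := by
          rw [Finset.sum_congr rfl (fun i _ => by rw [Nat.add_comm i j]), hshift j]
        rw [h, mul_zero]
      rw [Finset.sum_congr rfl inner, Finset.sum_const, smul_zero]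
    rw [hmix, Nat.sub_zero, nsmul_eq_mul]
    push_cast
    ring
  linarith

/-- main window estimate: over a window of length L, the count of good j's is
L·W/(2t) up to an additive error. -/
lemma cnt_err (t : ℕ) (ht : 1 ≤ t) (i a L : ℕ) :
    |(2*t : ℤ) * (∑ j ∈ Ico a (a+L), indZ t i j) - (L : ℤ) * WZ t i| ≤ 4*t^2 := by
  set q := L / (2*t) with hq
  set r := L % (2*t) with hr
  have hL : q*(2*t) + r = L := by rw [mul_comm]; exact Nat.div_add_mod L (2*t)
  have hr2 : r < 2*t := Nat.mod_lt _ (by omega)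
  have hsplit : ∑ j ∈ Ico a (a + q*(2*t)), indZ t i j
      + ∑ j ∈ Ico (a + q*(2*t)) (a + L), indZ t i j = ∑ j ∈ Ico a (a+L), indZ t i j :=
    Finset.sum_Ico_consecutive _ (by omega) (by omega)
  have hS1 : ∑ j ∈ Ico a (a + q*(2*t)), indZ t i j = (q : ℤ) * WZ t i := by
    rw [sum_blocks (indZ t i) (2*t) (indZ_period t ht i) a q, nsmul_eq_mul]
    rfl
  set R := ∑ j ∈ Ico (a + q*(2*t)) (a + L), indZ t i j with hR
  have hR0 : 0 ≤ R := Finset.sum_nonneg fun j _ => indZ_nonneg t i j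
  have hRW : R ≤ WZ t i := by
    have hfull : ∑ j ∈ Ico (a + q*(2*t)) (a + q*(2*t) + 2*t), indZ t i j = WZ t i :=
      sum_window (indZ t i) (2*t) (indZ_period t ht i) _
    have hsplit2 : R + ∑ j ∈ Ico (a + L) (a + q*(2*t) + 2*t), indZ t i j
        = ∑ j ∈ Ico (a + q*(2*t)) (a + q*(2*t) + 2*t), indZ t i j :=
      Finset.sum_Ico_consecutive _ (by omega) (by omega)
    have htail : 0 ≤ ∑ j ∈ Ico (a + L) (a + q*(2*t) + 2*t), indZ t i j :=
      Finset.sum_nonneg fun j _ => indZ_nonneg t i j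
    linarith [hfull, hsplit2, htail]
  have hW0 : 0 ≤ WZ t i := WZ_nonneg t i
  have hW2 : WZ t i ≤ 2*t := WZ_le t i
  have hSeq : ∑ j ∈ Ico a (a+L), indZ t i j = (q : ℤ) * WZ t i + R := by
    rw [← hsplit, hS1]
  rw [hSeq]
  have hLZ : (L : ℤ) = 2*t*q + r := by push_cast [← hL]; ring
  have hrZ : (r : ℤ) < 2*t := by exact_mod_cast hr2
  have hr0 : (0:ℤ) ≤ r := by positivity
  rw [hLZ]
  rw [abs_le]
  constructor
  · nlinarith [mul_nonneg hr0 hW0, mul_nonneg (mul_nonneg (by positivity : (0:ℤ) ≤ 2*t) hr0) hW0]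
  · nlinarith [mul_nonneg hr0 hW0]

lemma abel_identity (a ε : ℕ → ℤ) (n : ℕ) :
    ∑ i ∈ Ico 1 (n+1), a i * ε i
      = a n * (∑ i ∈ Ico 1 (n+1), ε i)
        + ∑ k ∈ Ico 1 n, (a k - a (k+1)) * (∑ i ∈ Ico 1 (k+1), ε i) := by
  induction n with
  | zero => simp
  | succ n ih =>
    rcases Nat.eq_zero_or_pos n with h0 | h1
    · subst h0
      rw [show (1:ℕ)+1 = 2 from rfl, show (2:ℕ) = 1+1 from rfl,
          Finset.sum_Ico_succ_top (le_refl 1) (fun i => a i * ε i),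
          Finset.sum_Ico_succ_top (le_refl 1) ε]
      simp
    · rw [Finset.sum_Ico_succ_top (by omega : 1 ≤ n+1) (fun i => a i * ε i),
          Finset.sum_Ico_succ_top (by omega : 1 ≤ n+1) ε,
          Finset.sum_Ico_succ_top (by omega : 1 ≤ n) (fun k => (a k - a (k+1)) * (∑ i ∈ Ico 1 (k+1), ε i)),
          ih]
      ring

lemma abel_bound (a ε : ℕ → ℤ) (E : ℤ)
    (hmono : ∀ k, a (k+1) ≤ a k) (hpos : ∀ k, 0 ≤ a k)
    (hA : ∀ k, |∑ i ∈ Ico 1 (k+1), ε i| ≤ E) (n : ℕ) (hn : 1 ≤ n) :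
    |∑ i ∈ Ico 1 (n+1), a i * ε i| ≤ a 1 * E := by
  have hE : 0 ≤ E := le_trans (abs_nonneg _) (hA 0)
  rw [abel_identity]
  have htel : ∑ k ∈ Ico 1 n, (a k - a (k+1)) = a 1 - a n := by
    rw [Finset.sum_Ico_eq_sum_range]
    have := Finset.sum_range_sub' (fun j => a (1+j)) (n-1)
    simpa [show 1 + (n-1) = n by omega, ← add_assoc] using this
  calc |a n * (∑ i ∈ Ico 1 (n+1), ε i)
        + ∑ k ∈ Ico 1 n, (a k - a (k+1)) * (∑ i ∈ Ico 1 (k+1), ε i)|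
      ≤ |a n * (∑ i ∈ Ico 1 (n+1), ε i)|
        + |∑ k ∈ Ico 1 n, (a k - a (k+1)) * (∑ i ∈ Ico 1 (k+1), ε i)| := abs_add_le _ _
    _ ≤ a n * E + ∑ k ∈ Ico 1 n, (a k - a (k+1)) * E := by
        gcongr ?_ + ?_
        · rw [abs_mul, abs_of_nonneg (hpos n)]
          exact mul_le_mul_of_nonneg_left (hA n) (hpos n)
        · calc |∑ k ∈ Ico 1 n, (a k - a (k+1)) * (∑ i ∈ Ico 1 (k+1), ε i)|
              ≤ ∑ k ∈ Ico 1 n, |(a k - a (k+1)) * (∑ i ∈ Ico 1 (k+1), ε i)| :=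
                Finset.abs_sum_le_sum_abs _ _
            _ ≤ ∑ k ∈ Ico 1 n, (a k - a (k+1)) * E := by
                apply Finset.sum_le_sum
                intro k _
                rw [abs_mul, abs_of_nonneg (by linarith [hmono k] : (0:ℤ) ≤ a k - a (k+1))]
                exact mul_le_mul_of_nonneg_left (hA k) (by linarith [hmono k])
    _ = a n * E + (a 1 - a n) * E := by rw [← Finset.sum_mul, htel]
    _ = a 1 * E := by ring

/-- partial sums of 2·W − t are bounded. -/
lemma eps_partial (t : ℕ) (ht : 1 ≤ t) (k : ℕ) :
    |∑ i ∈ Ico 1 (k+1), (2 * WZ t i - t)| ≤ 6*t^2 := by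
  set ε : ℕ → ℤ := fun i => 2 * WZ t i - t with hε
  have hper : ∀ x, ε (x + 2*t) = ε x := by
    intro x; simp only [hε, WZ_period t ht]
  have hper_sum : ∑ i ∈ Ico 0 (2*t), ε i = 0 := by
    simp only [hε]
    rw [Finset.sum_sub_distrib, ← Finset.mul_sum, sum_WZ t ht, Finset.sum_const, Nat.card_Ico]
    rw [Nat.sub_zero, nsmul_eq_mul]
    push_cast
    ring
  set q := k / (2*t) with hq
  set r := k % (2*t) with hr
  have hL : q*(2*t) + r = k := by rw [mul_comm]; exact Nat.div_add_mod k (2*t)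
  have hr2 : r < 2*t := Nat.mod_lt _ (by omega)
  have hsplit : ∑ i ∈ Ico 1 (1 + q*(2*t)), ε i + ∑ i ∈ Ico (1 + q*(2*t)) (k+1), ε i
      = ∑ i ∈ Ico 1 (k+1), ε i :=
    Finset.sum_Ico_consecutive _ (by omega) (by omega)
  have h1 : ∑ i ∈ Ico 1 (1 + q*(2*t)), ε i = 0 := by
    rw [sum_blocks ε (2*t) hper 1 q, hper_sum, smul_zero]
  have h2 : |∑ i ∈ Ico (1 + q*(2*t)) (k+1), ε i| ≤ 6*t^2 := by
    calc |∑ i ∈ Ico (1 + q*(2*t)) (k+1), ε i| ≤ ∑ i ∈ Ico (1 + q*(2*t)) (k+1), |ε i| :=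
          Finset.abs_sum_le_sum_abs _ _
      _ ≤ ∑ i ∈ Ico (1 + q*(2*t)) (k+1), (3*t : ℤ) := by
          apply Finset.sum_le_sum
          intro i _
          simp only [hε]
          have := WZ_nonneg t i
          have := WZ_le t i
          rw [abs_le]
          constructor <;> push_cast <;> linarith
      _ = (k + 1 - (1 + q*(2*t)) : ℕ) * (3*t : ℤ) := by rw [Finset.sum_const, Nat.card_Ico, nsmul_eq_mul]
      _ ≤ 6*t^2 := by
          have hcard : (k + 1 - (1 + q*(2*t)) : ℕ) ≤ 2*t := by omega
          have : ((k + 1 - (1 + q*(2*t)) : ℕ) : ℤ) ≤ 2*t := by exact_mod_cast hcard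
          nlinarith [this]
  rw [← hsplit, h1, zero_add]
  exact h2

lemma gauss_linear (X : ℤ) (M : ℕ) :
    ∑ i ∈ Icc 1 M, (X - 2*(i:ℤ)) = M*X - M*M - M := by
  induction M with
  | zero => simp
  | succ M ih =>
    rw [← Finset.Ico_add_one_right_eq_Icc] at *
    rw [Finset.sum_Ico_succ_top (by omega) (fun i => X - 2*(i:ℤ)), ih]
    push_cast
    ring

lemma schur_decomp (t : ℕ) (ht : 1 ≤ t) (n : ℕ) :
    ((schurCount n (altColoring t) : ℤ))
      = ∑ i ∈ Icc 1 n, ∑ j ∈ Ico (i+1) (i+1+(n+1-i-(i+1))), indZ t i j := by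
  unfold schurCount
  rw [Finset.card_filter]
  push_cast
  rw [Finset.sum_product]
  apply Finset.sum_congr rfl
  intro i hi
  simp only [Finset.mem_Icc] at hi
  have hsub : Ico (i+1) (i+1+(n+1-i-(i+1))) ⊆ Icc 1 n := by
    intro j hj
    simp only [Finset.mem_Ico] at hj
    simp only [Finset.mem_Icc]
    omega
  rw [← Finset.sum_subset hsub (f := fun j =>
      if i < j ∧ i + j ≤ n ∧ altColoring t i = altColoring t j ∧
        altColoring t j = altColoring t (i+j) then (1:ℤ) else 0)]
  · apply Finset.sum_congr rfl
    intro j hj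
    simp only [Finset.mem_Ico] at hj
    unfold indZ
    have h1 : i < j := by omega
    have h2 : i + j ≤ n := by omega
    by_cases hc : altColoring t j = altColoring t i ∧ altColoring t (i+j) = altColoring t i
    · rw [if_pos ⟨h1, h2, hc.1.symm, hc.1.trans hc.2.symm⟩, if_pos hc]
    · rw [if_neg, if_neg hc]
      rintro ⟨-, -, hca, hcb⟩
      exact hc ⟨hca.symm, hcb.symm.trans hca.symm⟩
  · intro j hjIcc hjw
    simp only [Finset.mem_Icc] at hjIcc
    simp only [Finset.mem_Ico, not_and, not_lt] at hjw
    rw [if_neg]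
    rintro ⟨h1, h2, -⟩
    omega

def ellN (n i : ℕ) : ℕ := n + 1 - i - (i+1)

lemma ellN_cast (n i : ℕ) (h : i ≤ n/2) : (ellN n i : ℤ) = (n:ℤ) - 2*i := by
  unfold ellN; omega

lemma sum_ellN (n : ℕ) :
    ∑ i ∈ Icc 1 n, (ellN n i : ℤ) = (n/2 : ℕ)*(n:ℤ) - (n/2 : ℕ)*(n/2 : ℕ) - (n/2 : ℕ) := by
  have hshrink : ∑ i ∈ Icc 1 n, (ellN n i : ℤ) = ∑ i ∈ Icc 1 (n/2), (ellN n i : ℤ) := by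
    symm
    apply Finset.sum_subset
    · intro i hi
      simp only [Finset.mem_Icc] at *
      omega
    · intro i hi hni
      simp only [Finset.mem_Icc] at *
      have : ellN n i = 0 := by unfold ellN; omega
      rw [this]; rfl
  rw [hshrink,
    Finset.sum_congr rfl (fun i hi => ellN_cast n i (by simp only [Finset.mem_Icc] at hi; omega))]
  exact gauss_linear n (n/2)

lemma sum_ellN_est (n : ℕ) :
    |4 * (∑ i ∈ Icc 1 n, (ellN n i : ℤ)) - (n:ℤ)^2| ≤ (3*n : ℤ) := by
  rw [sum_ellN n]
  have hM0 : (0:ℤ) ≤ ((n/2 : ℕ) : ℤ) := by positivity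
  have hcase : n = 2*(n/2) ∨ n = 2*(n/2) + 1 := by omega
  rcases hcase with h | h
  · have hZ : (n:ℤ) = 2*((n/2 : ℕ) : ℤ) := by exact_mod_cast congrArg (Nat.cast (R := ℤ)) h
    rw [abs_le]
    constructor <;> nlinarith [hZ]
  · have hZ : (n:ℤ) = 2*((n/2 : ℕ) : ℤ) + 1 := by exact_mod_cast congrArg (Nat.cast (R := ℤ)) h
    rw [abs_le]
    constructor <;> nlinarith [hZ]

theorem schurCount_alt (t : ℕ) (ht : 1 ≤ t) :
    ∃ C : ℝ, ∀ n : ℕ,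
      |(schurCount n (altColoring t) : ℝ) - (n : ℝ) ^ 2 / 16| ≤ C * n := by
  use 4*t
  intro n
  rcases Nat.eq_zero_or_pos n with hn0 | hn1
  · subst hn0
    simp [schurCount]
  have h1 : |2*(t:ℤ)*(schurCount n (altColoring t) : ℤ)
      - ∑ i ∈ Icc 1 n, (ellN n i : ℤ) * WZ t i| ≤ 4*t^2*n := by
    rw [schur_decomp t ht n, Finset.mul_sum, ← Finset.sum_sub_distrib]
    have hw : ∀ i, i + 1 + (n+1-i-(i+1)) = i + 1 + ellN n i := fun i => rfl
    calc |∑ i ∈ Icc 1 n, (2*(t:ℤ) * ∑ j ∈ Ico (i+1) (i+1+(n+1-i-(i+1))), indZ t i j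
            - (ellN n i : ℤ) * WZ t i)|
        ≤ ∑ i ∈ Icc 1 n, |2*(t:ℤ) * ∑ j ∈ Ico (i+1) (i+1+(n+1-i-(i+1))), indZ t i j
            - (ellN n i : ℤ) * WZ t i| := Finset.abs_sum_le_sum_abs _ _
      _ ≤ ∑ i ∈ Icc 1 n, (4*(t:ℤ)^2) := by
          apply Finset.sum_le_sum
          intro i _
          exact cnt_err t ht i (i+1) (ellN n i)
      _ = 4*t^2*n := by
          rw [Finset.sum_const, Nat.card_Icc, nsmul_eq_mul]
          push_cast
          ring
  have h2 : |2 * (∑ i ∈ Icc 1 n, (ellN n i : ℤ) * WZ t i)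
      - t * ∑ i ∈ Icc 1 n, (ellN n i : ℤ)| ≤ 6*t^2*n := by
    have heq : 2 * (∑ i ∈ Icc 1 n, (ellN n i : ℤ) * WZ t i)
          - t * ∑ i ∈ Icc 1 n, (ellN n i : ℤ)
        = ∑ i ∈ Ico 1 (n+1), (ellN n i : ℤ) * (2 * WZ t i - t) := by
      rw [Finset.Ico_add_one_right_eq_Icc, Finset.mul_sum, Finset.mul_sum, ← Finset.sum_sub_distrib]
      apply Finset.sum_congr rfl
      intro i _
      ring
    rw [heq]
    have hbound := abel_bound (fun i => (ellN n i : ℤ)) (fun i => 2 * WZ t i - t) (6*t^2)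
      (fun k => Nat.cast_le.mpr (by unfold ellN; omega))
      (fun k => by positivity)
      (fun k => eps_partial t ht k) n hn1
    refine le_trans hbound ?_
    have hl1 : ((ellN n 1 : ℕ) : ℤ) ≤ n := Nat.cast_le.mpr (by unfold ellN; omega)
    have hE : (0:ℤ) ≤ 6*t^2 := by positivity
    have hl0 : (0:ℤ) ≤ ((ellN n 1 : ℕ) : ℤ) := by positivity
    nlinarith [hl1, hE, hl0]
  have h3b := sum_ellN_est n
  -- combine in ℤ
  have key : |16*(t:ℤ)*(schurCount n (altColoring t) : ℤ) - t*(n:ℤ)^2|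
      ≤ (56*(t:ℤ)^2 + 3*(t:ℤ)) * (n:ℤ) := by
    set x : ℤ := 2*(t:ℤ)*(schurCount n (altColoring t) : ℤ)
      - ∑ i ∈ Icc 1 n, (ellN n i : ℤ) * WZ t i with hxdef
    set y : ℤ := 2 * (∑ i ∈ Icc 1 n, (ellN n i : ℤ) * WZ t i)
      - t * ∑ i ∈ Icc 1 n, (ellN n i : ℤ) with hydef
    set z : ℤ := 4 * (∑ i ∈ Icc 1 n, (ellN n i : ℤ)) - (n:ℤ)^2 with hzdef
    have hiden : 16*(t:ℤ)*(schurCount n (altColoring t) : ℤ) - t*(n:ℤ)^2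
        = 8*x + 4*y + t*z := by rw [hxdef, hydef, hzdef]; ring
    have ht0 : (0:ℤ) ≤ t := by positivity
    rw [hiden]
    calc |8*x + 4*y + (t:ℤ)*z| ≤ |8*x| + |4*y| + |(t:ℤ)*z| := abs_add_three _ _ _
      _ = 8*|x| + 4*|y| + t*|z| := by
          rw [abs_mul, abs_mul, abs_mul, show |(8:ℤ)| = 8 by norm_num,
              show |(4:ℤ)| = 4 by norm_num, abs_of_nonneg ht0]
      _ ≤ 8*(4*t^2*n) + 4*(6*t^2*n) + t*(3*n) := by
          gcongr
      _ = (56*(t:ℤ)^2 + 3*(t:ℤ)) * (n:ℤ) := by ring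
  -- pass to ℝ
  have keyR : |16*(t:ℝ)*(schurCount n (altColoring t) : ℝ) - t*(n:ℝ)^2|
      ≤ (56*(t:ℝ)^2 + 3*t) * n := by exact_mod_cast key
  have ht0 : (0:ℝ) < t := by exact_mod_cast ht
  have h16 : (0:ℝ) < 16*t := by linarith
  have hrw : (schurCount n (altColoring t) : ℝ) - (n:ℝ)^2/16
      = (16*(t:ℝ)*(schurCount n (altColoring t) : ℝ) - t*(n:ℝ)^2) / (16*t) := by
    field_simp
  rw [hrw, abs_div, abs_of_pos h16, div_le_iff₀ h16]
  have ht1 : (1:ℝ) ≤ t := by exact_mod_cast ht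
  have hfac : (56*(t:ℝ)^2 + 3*(t:ℝ)) ≤ 4*(t:ℝ)*(16*t) := by nlinarith [ht1]
  have hn0' : (0:ℝ) ≤ (n:ℝ) := by positivity
  calc |16*(t:ℝ)*(schurCount n (altColoring t) : ℝ) - t*(n:ℝ)^2|
      ≤ (56*(t:ℝ)^2 + 3*(t:ℝ)) * n := keyR
    _ ≤ (4*(t:ℝ)*(16*t)) * n := mul_le_mul_of_nonneg_right hfac hn0'
    _ = 4*(t:ℝ)*n*(16*t) := by ring
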